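/- In the symmetric group S_n with the Bruhat order, u ≤ v if and only if for every i with 1 ≤ i ≤ n, the i-th partial sorted sequence of u is componentwise at most that of v; that is, u({1,...,i}) ≤ v({1,...,i}) where i-subsets are compared by sorting and comparing componentwise. -/

import Mathlib

open Finset

/-- Number of inversions of a permutation of `Fin n`. -/
def invCount {n : ℕ} (w : Equiv.Perm (Fin n)) : ℕ :=
  (Finset.univ.filter fun p : Fin n × Fin n => p.1 < p.2 ∧ w p.2 < w p.1).card

/-- One step of the Bruhat order: `v = u·t` for a transposition `t`, with the number
of inversions increasing. -/
def bruhatStep {n : ℕ} (u v : Equiv.Perm (Fin n)) : Prop :=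
  ∃ t : Equiv.Perm (Fin n), t.IsSwap ∧ v = u * t ∧ invCount u < invCount v

/-- The Bruhat order on `S_n`: the reflexive-transitive closure of `bruhatStep`. -/
def bruhatLE {n : ℕ} : Equiv.Perm (Fin n) → Equiv.Perm (Fin n) → Prop :=
  Relation.ReflTransGen bruhatStep

section Helpers

variable {n : ℕ}

lemma invCount_swap_lt {n : ℕ} (w : Equiv.Perm (Fin n)) (i j : Fin n)
    (hij : i < j) (hw : w i < w j) :
    invCount w < invCount (w * Equiv.swap i j) := by
  set σ := Equiv.swap i j with hσ
  set w' := w * σ with hw'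
  have hσσ : ∀ x, σ (σ x) = x := fun x => Equiv.swap_apply_self i j x
  have happ : ∀ x, w' x = w (σ x) := fun x => rfl
  have hsplit : ∀ f : Equiv.Perm (Fin n),
      (Finset.univ.filter fun x : Fin n × Fin n => x.1 < x.2 ∧ f x.2 < f x.1).card =
      (Finset.univ.filter fun x : Fin n × Fin n =>
        x.1 < x.2 ∧ f x.2 < f x.1 ∧ σ x.2 < σ x.1).card +
      (Finset.univ.filter fun x : Fin n × Fin n =>
        x.1 < x.2 ∧ f x.2 < f x.1 ∧ σ x.1 < σ x.2).card := by
    intro f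
    rw [← Finset.card_union_of_disjoint]
    · congr 1
      ext x
      simp only [mem_filter, mem_union, mem_univ, true_and]
      constructor
      · rintro ⟨h1, h2⟩
        have hne : σ x.1 ≠ σ x.2 := fun h => absurd (σ.injective h) (ne_of_lt h1)
        rcases lt_or_gt_of_ne hne with h | h
        · exact Or.inr ⟨h1, h2, h⟩
        · exact Or.inl ⟨h1, h2, h⟩
      · rintro (⟨h1, h2, _⟩ | ⟨h1, h2, _⟩) <;> exact ⟨h1, h2⟩
    · rw [Finset.disjoint_left]
      rintro x hx hx'
      simp only [mem_filter] at hx hx'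
      exact absurd hx.2.2.2 (lt_asymm hx'.2.2.2)
  have hB : (Finset.univ.filter fun x : Fin n × Fin n =>
        x.1 < x.2 ∧ w x.2 < w x.1 ∧ σ x.1 < σ x.2).card =
      (Finset.univ.filter fun x : Fin n × Fin n =>
        x.1 < x.2 ∧ w' x.2 < w' x.1 ∧ σ x.1 < σ x.2).card := by
    apply Finset.card_bij (fun x _ => (σ x.1, σ x.2))
    · rintro ⟨a, b⟩ hx
      simp only [mem_filter, mem_univ, true_and] at hx ⊢
      obtain ⟨h1, h2, h3⟩ := hx
      exact ⟨h3, by rw [happ, happ, hσσ, hσσ]; exact h2, by rw [hσσ, hσσ]; exact h1⟩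
    · rintro ⟨a, b⟩ _ ⟨c, d⟩ _ h
      simp only [Prod.mk.injEq] at h
      exact Prod.ext (σ.injective h.1) (σ.injective h.2)
    · rintro ⟨a, b⟩ hy
      simp only [mem_filter, mem_univ, true_and] at hy
      obtain ⟨h1, h2, h3⟩ := hy
      refine ⟨(σ a, σ b), ?_, by simp [hσσ]⟩
      simp only [mem_filter, mem_univ, true_and]
      rw [happ, happ] at h2
      exact ⟨h3, h2, by rw [hσσ, hσσ]; exact h1⟩
  have hA : (Finset.univ.filter fun x : Fin n × Fin n =>
        x.1 < x.2 ∧ w x.2 < w x.1 ∧ σ x.2 < σ x.1) ⊂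
      (Finset.univ.filter fun x : Fin n × Fin n =>
        x.1 < x.2 ∧ w' x.2 < w' x.1 ∧ σ x.2 < σ x.1) := by
    rw [Finset.ssubset_iff_of_subset]
    · refine ⟨(i, j), ?_, ?_⟩
      · simp only [mem_filter, mem_univ, true_and]
        refine ⟨hij, ?_, ?_⟩
        · rw [happ, happ, Equiv.swap_apply_left, Equiv.swap_apply_right]
          exact hw
        · rw [Equiv.swap_apply_left, Equiv.swap_apply_right]
          exact hij
      · simp only [mem_filter, mem_univ, true_and]
        rintro ⟨-, h2, -⟩
        exact absurd h2 (lt_asymm hw)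
    · rintro ⟨a, b⟩ hx
      simp only [mem_filter, mem_univ, true_and] at hx ⊢
      obtain ⟨h1, h2, h3⟩ := hx
      refine ⟨h1, ?_, h3⟩
      rw [happ, happ]
      rcases eq_or_ne a i with hai | hai
      · rcases eq_or_ne b j with hbj | hbj
        · rw [hai, hbj] at h2
          exact absurd h2 (lt_asymm hw)
        · have hbi : b ≠ i := fun h => absurd ((hai.trans h.symm) ▸ h1) (lt_irrefl b)
          rw [hai, Equiv.swap_apply_left, Equiv.swap_apply_of_ne_of_ne hbi hbj]
          rw [hai] at h2
          exact lt_trans h2 hw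
      · rcases eq_or_ne a j with haj | haj
        · rcases eq_or_ne b i with hbi | hbi
          · rw [haj, hbi] at h1
            exact absurd h1 (lt_asymm hij)
          · rcases eq_or_ne b j with hbj | hbj
            · rw [haj, hbj] at h1
              exact absurd h1 (lt_irrefl _)
            · rw [haj, Equiv.swap_apply_right,
                Equiv.swap_apply_of_ne_of_ne hbi hbj] at h3
              rw [haj] at h1
              exact absurd (lt_trans h3 hij) (lt_asymm h1)
        · rcases eq_or_ne b i with hbi | hbi
          · rw [hbi, Equiv.swap_apply_left, Equiv.swap_apply_of_ne_of_ne hai haj] at h3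
            rw [hbi] at h1
            exact absurd (lt_trans h1 hij) (lt_asymm h3)
          · rcases eq_or_ne b j with hbj | hbj
            · rw [hbj, Equiv.swap_apply_right, Equiv.swap_apply_of_ne_of_ne hai haj]
              rw [hbj] at h2
              exact lt_trans hw h2
            · rw [Equiv.swap_apply_of_ne_of_ne hai haj,
                Equiv.swap_apply_of_ne_of_ne hbi hbj] at h3
              exact absurd h1 (lt_asymm h3)
  calc invCount w = _ + _ := hsplit w
    _ < _ + _ := Nat.add_lt_add_of_lt_of_le (Finset.card_lt_card hA) (le_of_eq hB)
    _ = invCount w' := (hsplit w').symm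



def cnt (w : Equiv.Perm (Fin n)) (c k : ℕ) : ℕ :=
  (Finset.univ.filter fun j : Fin n => (j : ℕ) < c ∧ k ≤ (w j : ℕ)).card

def cntBtw (w : Equiv.Perm (Fin n)) (c k k' : ℕ) : ℕ :=
  (Finset.univ.filter fun j : Fin n => (j : ℕ) < c ∧ k ≤ (w j : ℕ) ∧ (w j : ℕ) < k').card

lemma cnt_zero (w : Equiv.Perm (Fin n)) (k : ℕ) : cnt w 0 k = 0 := by
  simp [cnt]

lemma cnt_congr {u v : Equiv.Perm (Fin n)} {c : ℕ}
    (h : ∀ j : Fin n, (j : ℕ) < c → u j = v j) (k : ℕ) : cnt u c k = cnt v c k := by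
  unfold cnt
  congr 1
  apply Finset.filter_congr
  intro j _
  constructor
  · rintro ⟨h1, h2⟩; exact ⟨h1, by rw [← h j h1]; exact h2⟩
  · rintro ⟨h1, h2⟩; exact ⟨h1, by rw [h j h1]; exact h2⟩

lemma cntBtw_congr {u v : Equiv.Perm (Fin n)} {c : ℕ}
    (h : ∀ j : Fin n, (j : ℕ) < c → u j = v j) (k k' : ℕ) :
    cntBtw u c k k' = cntBtw v c k k' := by
  unfold cntBtw
  congr 1
  apply Finset.filter_congr
  intro j _
  constructor
  · rintro ⟨h1, h2⟩; exact ⟨h1, by rw [← h j h1]; exact h2⟩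
  · rintro ⟨h1, h2⟩; exact ⟨h1, by rw [h j h1]; exact h2⟩

lemma cnt_clamp (w : Equiv.Perm (Fin n)) {c : ℕ} (h : n ≤ c) (k : ℕ) :
    cnt w c k = cnt w n k := by
  unfold cnt
  congr 1
  apply Finset.filter_congr
  intro j _
  have := j.isLt
  constructor
  · rintro ⟨-, h2⟩; exact ⟨this, h2⟩
  · rintro ⟨-, h2⟩; exact ⟨lt_of_lt_of_le this h, h2⟩

private lemma filter_succ_card (P : Fin n → Prop) [DecidablePred P] (i : Fin n) :
    (Finset.univ.filter fun j : Fin n => (j : ℕ) < (i : ℕ) + 1 ∧ P j).card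
      = (Finset.univ.filter fun j : Fin n => (j : ℕ) < (i : ℕ) ∧ P j).card
        + if P i then 1 else 0 := by
  have hset : (Finset.univ.filter fun j : Fin n => (j : ℕ) < (i : ℕ) + 1 ∧ P j)
      = (Finset.univ.filter fun j : Fin n => (j : ℕ) < (i : ℕ) ∧ P j)
        ∪ (Finset.univ.filter fun j : Fin n => j = i ∧ P j) := by
    ext j
    simp only [mem_filter, mem_union, mem_univ, true_and]
    constructor
    · rintro ⟨h1, h2⟩
      rcases Nat.lt_succ_iff_lt_or_eq.mp h1 with h | h
      · exact Or.inl ⟨h, h2⟩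
      · exact Or.inr ⟨Fin.ext h, h2⟩
    · rintro (⟨h1, h2⟩ | ⟨h1, h2⟩)
      · exact ⟨Nat.lt_succ_of_lt h1, h2⟩
      · subst h1; exact ⟨Nat.lt_succ_self _, h2⟩
  rw [hset, Finset.card_union_of_disjoint]
  · congr 1
    by_cases hP : P i
    · rw [if_pos hP]
      have : (Finset.univ.filter fun j : Fin n => j = i ∧ P j) = {i} := by
        ext j
        simp only [mem_filter, mem_univ, true_and, mem_singleton]
        exact ⟨fun h => h.1, fun h => ⟨h, h ▸ hP⟩⟩
      rw [this, card_singleton]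
    · rw [if_neg hP]
      have : (Finset.univ.filter fun j : Fin n => j = i ∧ P j) = ∅ := by
        ext j
        simp only [mem_filter, mem_univ, true_and, notMem_empty, iff_false, not_and]
        rintro rfl
        exact hP
      rw [this, card_empty]
  · rw [Finset.disjoint_left]
    rintro j hj hj'
    simp only [mem_filter, mem_univ, true_and] at hj hj'
    rcases hj' with ⟨rfl, -⟩
    exact absurd hj.1 (lt_irrefl _)

lemma cnt_succ (w : Equiv.Perm (Fin n)) (i : Fin n) (k : ℕ) :
    cnt w ((i : ℕ) + 1) k = cnt w (i : ℕ) k + if k ≤ (w i : ℕ) then 1 else 0 :=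
  filter_succ_card (fun j => k ≤ (w j : ℕ)) i

lemma cntBtw_succ (w : Equiv.Perm (Fin n)) (i : Fin n) (k k' : ℕ) :
    cntBtw w ((i : ℕ) + 1) k k'
      = cntBtw w (i : ℕ) k k' + if k ≤ (w i : ℕ) ∧ (w i : ℕ) < k' then 1 else 0 :=
  filter_succ_card (fun j => k ≤ (w j : ℕ) ∧ (w j : ℕ) < k') i

lemma cnt_split (w : Equiv.Perm (Fin n)) (c : ℕ) {k k' : ℕ} (h : k ≤ k') :
    cnt w c k = cnt w c k' + cntBtw w c k k' := by
  unfold cnt cntBtw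
  rw [← Finset.card_union_of_disjoint]
  · congr 1
    ext j
    simp only [mem_filter, mem_union, mem_univ, true_and]
    omega
  · rw [Finset.disjoint_left]
    rintro j hj hj'
    simp only [mem_filter, mem_univ, true_and] at hj hj'
    omega

lemma cntBtw_mono (w : Equiv.Perm (Fin n)) {c c' : ℕ} (h : c ≤ c') (k k' : ℕ) :
    cntBtw w c k k' ≤ cntBtw w c' k k' := by
  apply Finset.card_le_card
  intro j hj
  simp only [Finset.mem_filter, Finset.mem_univ, true_and] at hj ⊢
  omega

lemma cnt_mul_swap_sub (u : Equiv.Perm (Fin n)) (a b : Fin n) (c k : ℕ) :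
    cnt (u * Equiv.swap a b) c k
      = (Finset.univ.filter fun j : Fin n =>
          ((Equiv.swap a b j : Fin n) : ℕ) < c ∧ k ≤ (u j : ℕ)).card := by
  unfold cnt
  symm
  apply Finset.card_bij (fun j _ => Equiv.swap a b j)
  · intro j hj
    simp only [mem_filter, mem_univ, true_and] at hj ⊢
    refine ⟨hj.1, ?_⟩
    show k ≤ ((u (Equiv.swap a b (Equiv.swap a b j)) : Fin n) : ℕ)
    rw [Equiv.swap_apply_self]
    exact hj.2
  · intro x _ y _ h
    exact (Equiv.swap a b).injective h
  · intro x hx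
    simp only [mem_filter, mem_univ, true_and] at hx
    refine ⟨Equiv.swap a b x, ?_, Equiv.swap_apply_self a b x⟩
    simp only [mem_filter, mem_univ, true_and, Equiv.swap_apply_self]
    exact ⟨hx.1, hx.2⟩

lemma cnt_mul_swap_of_not (u : Equiv.Perm (Fin n)) {a b : Fin n} (hab : a < b)
    {c : ℕ} (h : ¬((a : ℕ) < c ∧ c ≤ (b : ℕ))) (k : ℕ) :
    cnt (u * Equiv.swap a b) c k = cnt u c k := by
  rw [cnt_mul_swap_sub]
  unfold cnt
  congr 1
  apply Finset.filter_congr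
  intro j _
  have hab' : (a : ℕ) < (b : ℕ) := hab
  have key : ((Equiv.swap a b j : Fin n) : ℕ) < c ↔ (j : ℕ) < c := by
    rcases eq_or_ne j a with rfl | hja
    · rw [Equiv.swap_apply_left]; omega
    · rcases eq_or_ne j b with rfl | hjb
      · rw [Equiv.swap_apply_right]; omega
      · rw [Equiv.swap_apply_of_ne_of_ne hja hjb]
  rw [key]

lemma cnt_mul_swap_add (u : Equiv.Perm (Fin n)) {a b : Fin n} (hab : a < b)
    {c : ℕ} (h1 : (a : ℕ) < c) (h2 : c ≤ (b : ℕ)) (k : ℕ) :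
    cnt (u * Equiv.swap a b) c k + (if k ≤ (u a : ℕ) then 1 else 0)
      = cnt u c k + (if k ≤ (u b : ℕ) then 1 else 0) := by
  rw [cnt_mul_swap_sub]
  unfold cnt
  rw [Finset.card_filter, Finset.card_filter]
  have hba : b ≠ a := ne_of_gt hab
  have hbe : b ∈ Finset.univ.erase a := Finset.mem_erase.mpr ⟨hba, Finset.mem_univ b⟩
  rw [← Finset.add_sum_erase _ _ (Finset.mem_univ a), ← Finset.add_sum_erase _ _ hbe,
    ← Finset.add_sum_erase _ (fun j : Fin n => if (j : ℕ) < c ∧ k ≤ (u j : ℕ) then 1 else 0)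
      (Finset.mem_univ a),
    ← Finset.add_sum_erase _ (fun j : Fin n => if (j : ℕ) < c ∧ k ≤ (u j : ℕ) then 1 else 0) hbe]
  have hrest : ∑ j ∈ (Finset.univ.erase a).erase b,
        (if ((Equiv.swap a b j : Fin n) : ℕ) < c ∧ k ≤ (u j : ℕ) then 1 else 0)
      = ∑ j ∈ (Finset.univ.erase a).erase b,
        (if (j : ℕ) < c ∧ k ≤ (u j : ℕ) then 1 else 0) := by
    apply Finset.sum_congr rfl
    intro j hj
    rw [Finset.mem_erase, Finset.mem_erase] at hj
    rw [Equiv.swap_apply_of_ne_of_ne hj.2.1 hj.1]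
  rw [hrest]
  have e1 : (if ((Equiv.swap a b a : Fin n) : ℕ) < c ∧ k ≤ (u a : ℕ) then 1 else 0) = 0 := by
    rw [Equiv.swap_apply_left, if_neg]
    omega
  have e2 : (if ((Equiv.swap a b b : Fin n) : ℕ) < c ∧ k ≤ (u b : ℕ) then 1 else 0)
      = (if k ≤ (u b : ℕ) then 1 else 0) := by
    rw [Equiv.swap_apply_right]
    by_cases hk : k ≤ (u b : ℕ)
    · rw [if_pos ⟨h1, hk⟩, if_pos hk]
    · rw [if_neg (fun hh => hk hh.2), if_neg hk]
  have e3 : (if (a : ℕ) < c ∧ k ≤ (u a : ℕ) then 1 else 0)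
      = (if k ≤ (u a : ℕ) then 1 else 0) := by
    by_cases hk : k ≤ (u a : ℕ)
    · rw [if_pos ⟨h1, hk⟩, if_pos hk]
    · rw [if_neg (fun hh => hk hh.2), if_neg hk]
  have e4 : (if (b : ℕ) < c ∧ k ≤ (u b : ℕ) then 1 else 0) = 0 := by
    rw [if_neg]; omega
  rw [e1, e2, e3, e4]
  omega


lemma countP_le_of_forall₂ {l1 l2 : List ℕ} (h : List.Forall₂ (· ≤ ·) l1 l2) (k : ℕ) :
    l1.countP (fun x => k ≤ x) ≤ l2.countP (fun x => k ≤ x) := by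
  induction h with
  | nil => simp
  | @cons a b l1 l2 hab _ ih =>
    rw [List.countP_cons, List.countP_cons]
    have : (decide (k ≤ a) : Bool) = true → (decide (k ≤ b) : Bool) = true := by
      simp only [decide_eq_true_eq]
      omega
    rcases Bool.eq_false_or_eq_true (decide (k ≤ a)) with hd | hd <;>
      rcases Bool.eq_false_or_eq_true (decide (k ≤ b)) with hd' | hd' <;>
      simp [hd, hd'] at this ⊢ <;> omega

lemma forall₂_of_countP : ∀ {l1 l2 : List ℕ}, l1.Pairwise (· ≤ ·) → l2.Pairwise (· ≤ ·) →
    l1.length = l2.length →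
    (∀ k, l1.countP (fun x => k ≤ x) ≤ l2.countP (fun x => k ≤ x)) →
    List.Forall₂ (· ≤ ·) l1 l2 := by
  intro l1
  induction l1 with
  | nil =>
    intro l2 _ _ hlen _
    cases l2 with
    | nil => exact List.Forall₂.nil
    | cons b t => simp at hlen
  | cons a t ih =>
    intro l2 hs1 hs2 hlen hcnt
    cases l2 with
    | nil => simp at hlen
    | cons b t2 =>
      have hs1' := (List.pairwise_cons.mp hs1)
      have hs2' := (List.pairwise_cons.mp hs2)
      have hall1 : ∀ x ∈ a :: t, a ≤ x := by
        intro x hx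
        rcases List.mem_cons.mp hx with rfl | hx
        · exact le_refl x
        · exact hs1'.1 x hx
      have hab : a ≤ b := by
        have h1 : (a :: t).countP (fun x => a ≤ x) = (a :: t).length := by
          rw [List.countP_eq_length]
          intro x hx
          simpa using hall1 x hx
        have h2 := hcnt a
        rw [h1] at h2
        have h3 : (b :: t2).countP (fun x => a ≤ x) = (b :: t2).length := by
          have := List.countP_le_length (l := b :: t2) (p := fun x => decide (a ≤ x))
          rw [hlen] at h2
          omega
        rw [List.countP_eq_length] at h3
        simpa using h3 b (List.mem_cons_self (a := b) (l := t2))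
      refine List.Forall₂.cons hab (ih hs1'.2 hs2'.2 (by simpa using hlen) ?_)
      intro k
      by_cases hk : k ≤ a
      · have e1 : t.countP (fun x => k ≤ x) = t.length := by
          rw [List.countP_eq_length]
          intro x hx
          simp only [decide_eq_true_eq]
          exact le_trans hk (hs1'.1 x hx)
        have e2 : t2.countP (fun x => k ≤ x) = t2.length := by
          rw [List.countP_eq_length]
          intro x hx
          simp only [decide_eq_true_eq]
          exact le_trans (le_trans hk hab) (hs2'.1 x hx)
        rw [e1, e2]
        exact le_of_eq (by simpa using hlen)
      · have h2 := hcnt k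
        rw [List.countP_cons, List.countP_cons] at h2
        rw [if_neg (by simpa using hk)] at h2
        by_cases hkb : k ≤ b
        · have e2 : t2.countP (fun x => k ≤ x) = t2.length := by
            rw [List.countP_eq_length]
            intro x hx
            simp only [decide_eq_true_eq]
            exact le_trans hkb (hs2'.1 x hx)
          have := List.countP_le_length (l := t) (p := fun x => decide (k ≤ x))
          have hlen' : t.length = t2.length := by simpa using hlen
          omega
        · rw [if_neg (by simpa using hkb)] at h2
          omega

lemma sort_countP {A : Finset ℕ} (k : ℕ) :
    (A.sort (· ≤ ·)).countP (fun x => k ≤ x) = (A.filter fun x => k ≤ x).card := by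
  have h1 : ((A.sort (· ≤ ·) : List ℕ) : Multiset ℕ) = A.val := Finset.sort_eq _ _
  have h2 : (A.filter fun x => k ≤ x).card
      = Multiset.countP (fun x => k ≤ x) A.val := by
    rw [Multiset.countP_eq_card_filter]
    rfl
  rw [h2, ← h1, Multiset.coe_countP]

lemma sort_forall₂_iff {A B : Finset ℕ} (hcard : A.card = B.card) :
    List.Forall₂ (· ≤ ·) (A.sort (· ≤ ·)) (B.sort (· ≤ ·)) ↔
      ∀ k, (A.filter fun x => k ≤ x).card ≤ (B.filter fun x => k ≤ x).card := by
  constructor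
  · intro h k
    rw [← sort_countP, ← sort_countP]
    exact countP_le_of_forall₂ h k
  · intro h
    apply forall₂_of_countP (Finset.pairwise_sort _ _) (Finset.pairwise_sort _ _)
    · rw [Finset.length_sort, Finset.length_sort, hcard]
    · intro k
      rw [sort_countP, sort_countP]
      exact h k


def dom (u v : Equiv.Perm (Fin n)) : Prop := ∀ c k, cnt u c k ≤ cnt v c k

lemma dom_mul_swap {u : Equiv.Perm (Fin n)} {a b : Fin n} (hab : a < b)
    (hval : (u a : ℕ) < (u b : ℕ)) : dom u (u * Equiv.swap a b) := by
  intro c k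
  by_cases hc : (a : ℕ) < c ∧ c ≤ (b : ℕ)
  · have heq := cnt_mul_swap_add u hab hc.1 hc.2 k
    by_cases hk1 : k ≤ (u a : ℕ)
    · rw [if_pos hk1, if_pos (by omega)] at heq
      omega
    · rw [if_neg hk1] at heq
      by_cases hk2 : k ≤ (u b : ℕ)
      · rw [if_pos hk2] at heq; omega
      · rw [if_neg hk2] at heq; omega
  · rw [cnt_mul_swap_of_not u hab hc k]

lemma val_lt_of_step {u : Equiv.Perm (Fin n)} {a b : Fin n} (hab : a < b)
    (hinv : invCount u < invCount (u * Equiv.swap a b)) : (u a : ℕ) < (u b : ℕ) := by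
  have hne : (u a : ℕ) ≠ (u b : ℕ) := by
    intro h
    exact absurd (u.injective (Fin.ext h)) (ne_of_lt hab)
  rcases lt_or_gt_of_ne hne with h | h
  · exact h
  · exfalso
    have h1 : (u * Equiv.swap a b) a < (u * Equiv.swap a b) b := by
      have e1 : (u * Equiv.swap a b) a = u b := by
        show u (Equiv.swap a b a) = u b
        rw [Equiv.swap_apply_left]
      have e2 : (u * Equiv.swap a b) b = u a := by
        show u (Equiv.swap a b b) = u a
        rw [Equiv.swap_apply_right]
      rw [e1, e2]
      exact Fin.lt_def.mpr h
    have := invCount_swap_lt (u * Equiv.swap a b) a b hab h1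
    rw [mul_assoc, Equiv.swap_mul_self, mul_one] at this
    omega

lemma dom_of_step {u v : Equiv.Perm (Fin n)} (h : bruhatStep u v) : dom u v := by
  obtain ⟨t, ⟨x, y, hxy, rfl⟩, rfl, hinv⟩ := h
  rcases hxy.lt_or_gt with h | h
  · exact dom_mul_swap h (val_lt_of_step h hinv)
  · rw [Equiv.swap_comm] at hinv ⊢
    exact dom_mul_swap h (val_lt_of_step h hinv)

lemma dom_of_le {u v : Equiv.Perm (Fin n)} (h : bruhatLE u v) : dom u v := by
  induction h with
  | refl => exact fun c k => le_refl _
  | tail _ hbc ih => exact fun c k => le_trans (ih c k) (dom_of_step hbc c k)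

lemma invCount_le (w : Equiv.Perm (Fin n)) : invCount w ≤ n * n := by
  calc invCount w ≤ (Finset.univ : Finset (Fin n × Fin n)).card :=
        Finset.card_filter_le _ _
    _ = n * n := by simp

lemma exists_step {u v : Equiv.Perm (Fin n)} (hdom : dom u v) (hne : u ≠ v) :
    ∃ w, bruhatStep u w ∧ dom w v := by
  have hS : (Finset.univ.filter fun j : Fin n => u j ≠ v j).Nonempty := by
    by_contra h
    rw [Finset.not_nonempty_iff_eq_empty] at h
    apply hne
    apply Equiv.ext
    intro j
    by_contra hj
    have hmem : j ∈ (Finset.univ.filter fun j : Fin n => u j ≠ v j) :=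
      Finset.mem_filter.mpr ⟨Finset.mem_univ j, hj⟩
    rw [h] at hmem
    exact absurd hmem (Finset.notMem_empty j)
  obtain ⟨i, hiS, hilow⟩ : ∃ i : Fin n, u i ≠ v i ∧ ∀ j : Fin n, j < i → u j = v j := by
    refine ⟨Finset.min' _ hS, (Finset.mem_filter.mp (Finset.min'_mem _ hS)).2, ?_⟩
    intro j hj
    by_contra hj'
    exact absurd hj (not_lt.mpr (Finset.min'_le (Finset.univ.filter fun j : Fin n => u j ≠ v j)
      j (Finset.mem_filter.mpr ⟨Finset.mem_univ j, hj'⟩)))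
  have hmin' : ∀ j : Fin n, (j : ℕ) < (i : ℕ) → u j = v j := fun j hj => hilow j hj
  have hui : (u i : ℕ) < (v i : ℕ) := by
    have h1 := cnt_succ u i (u i : ℕ)
    have h2 := cnt_succ v i (u i : ℕ)
    have h3 := cnt_congr hmin' ((u i : ℕ))
    have h4 := hdom ((i : ℕ) + 1) (u i : ℕ)
    rw [if_pos (le_refl _)] at h1
    have hne' : (u i : ℕ) ≠ (v i : ℕ) := fun h => hiS (Fin.ext h)
    by_cases h5 : (u i : ℕ) ≤ (v i : ℕ)
    · omega
    · rw [if_neg h5] at h2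
      omega
  have hJ : (Finset.univ.filter fun p : Fin n =>
      i < p ∧ (u i : ℕ) < (u p : ℕ) ∧ (u p : ℕ) ≤ (v i : ℕ)).Nonempty := by
    refine ⟨u⁻¹ (v i), Finset.mem_filter.mpr ⟨Finset.mem_univ _, ?_, ?_, ?_⟩⟩
    · rcases lt_trichotomy (u⁻¹ (v i)) i with h | h | h
      · exfalso
        have h' := hilow _ h
        rw [Equiv.Perm.inv_def, Equiv.apply_symm_apply] at h'
        exact absurd (v.injective h'.symm) (ne_of_lt h)
      · exfalso
        have h' := congrArg u h
        rw [Equiv.Perm.inv_def, Equiv.apply_symm_apply] at h'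
        exact hiS h'.symm
      · exact h
    · rw [Equiv.Perm.inv_def, Equiv.apply_symm_apply]; exact hui
    · rw [Equiv.Perm.inv_def, Equiv.apply_symm_apply]
  obtain ⟨j, hmemJ, hlowJ⟩ : ∃ j : Fin n, (i < j ∧ (u i : ℕ) < (u j : ℕ) ∧
      (u j : ℕ) ≤ (v i : ℕ)) ∧ ∀ p : Fin n, p < j →
        ¬(i < p ∧ (u i : ℕ) < (u p : ℕ) ∧ (u p : ℕ) ≤ (v i : ℕ)) := by
    refine ⟨Finset.min' _ hJ, (Finset.mem_filter.mp (Finset.min'_mem _ hJ)).2, ?_⟩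
    intro p hp hcon
    exact absurd hp (not_lt.mpr (Finset.min'_le (Finset.univ.filter fun p : Fin n =>
      i < p ∧ (u i : ℕ) < (u p : ℕ) ∧ (u p : ℕ) ≤ (v i : ℕ)) p
      (Finset.mem_filter.mpr ⟨Finset.mem_univ p, hcon⟩)))
  obtain ⟨hij, huij, hujvi⟩ := hmemJ
  refine ⟨u * Equiv.swap i j, ⟨Equiv.swap i j, ⟨i, j, ne_of_lt hij, rfl⟩, rfl,
    invCount_swap_lt u i j hij (Fin.lt_def.mpr huij)⟩, ?_⟩
  intro c k
  by_cases hc : (i : ℕ) < c ∧ c ≤ (j : ℕ)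
  · have heq := cnt_mul_swap_add u hij hc.1 hc.2 k
    by_cases hk1 : k ≤ (u i : ℕ)
    · rw [if_pos hk1, if_pos (by omega : k ≤ (u j : ℕ))] at heq
      have hd := hdom c k
      omega
    · rw [if_neg hk1] at heq
      by_cases hk2 : k ≤ (u j : ℕ)
      · rw [if_pos hk2] at heq
        have hkk' : k ≤ (v i : ℕ) + 1 := by omega
        have s1 := cnt_split u c hkk'
        have s2 : cntBtw u c k ((v i : ℕ) + 1) = cntBtw u ((i : ℕ) + 1) k ((v i : ℕ) + 1) := by
          unfold cntBtw
          congr 1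
          apply Finset.filter_congr
          intro p _
          constructor
          · rintro ⟨hpc, hpk, hpk'⟩
            refine ⟨?_, hpk, hpk'⟩
            by_contra hpi
            have h1 : i < p := Fin.lt_def.mpr (by omega)
            have h2 : p < j := Fin.lt_def.mpr (by omega)
            exact hlowJ p h2 ⟨h1, by omega, by omega⟩
          · rintro ⟨hpi, hpk, hpk'⟩
            exact ⟨by omega, hpk, hpk'⟩
        have s3u := cntBtw_succ u i k ((v i : ℕ) + 1)
        rw [if_neg (fun hh => hk1 hh.1)] at s3u
        have s3v := cntBtw_succ v i k ((v i : ℕ) + 1)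
        rw [if_pos ⟨by omega, by omega⟩] at s3v
        have s4 := cntBtw_congr hmin' k ((v i : ℕ) + 1)
        have s5 := cntBtw_mono v (show (i : ℕ) + 1 ≤ c by omega) k ((v i : ℕ) + 1)
        have s6 := hdom c ((v i : ℕ) + 1)
        have s7 := cnt_split v c hkk'
        omega
      · rw [if_neg hk2] at heq
        have hd := hdom c k
        omega
  · rw [cnt_mul_swap_of_not u hij hc k]
    exact hdom c k

lemma le_of_dom {u v : Equiv.Perm (Fin n)} (h : dom u v) : bruhatLE u v := by
  suffices H : ∀ M (u : Equiv.Perm (Fin n)), n * n + 1 - invCount u ≤ M → dom u v →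
      bruhatLE u v from H _ u le_rfl h
  intro M
  induction M with
  | zero =>
    intro u hM _
    have := invCount_le u
    omega
  | succ M ih =>
    intro u hM hdom
    by_cases hne : u = v
    · subst hne
      exact Relation.ReflTransGen.refl
    · obtain ⟨w, hs, hd⟩ := exists_step hdom hne
      have h1 := invCount_le w
      have h2 : invCount u < invCount w := by
        obtain ⟨t, -, rfl, hlt⟩ := hs
        exact hlt
      exact Relation.ReflTransGen.head hs (ih w (by omega) hd)

lemma image_filter_card (u : Equiv.Perm (Fin n)) (i k : ℕ) :
    ((((Finset.univ.filter fun j : Fin n => (j : ℕ) < i).image fun j => (u j : ℕ)).filter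
      fun x => k ≤ x).card) = cnt u i k := by
  have hinj : Function.Injective (fun j : Fin n => (u j : ℕ)) :=
    fun x y h => u.injective (Fin.ext h)
  rw [Finset.filter_image, Finset.card_image_of_injective _ hinj, Finset.filter_filter]
  rfl

lemma card_image_eq (u v : Equiv.Perm (Fin n)) (i : ℕ) :
    ((Finset.univ.filter fun j : Fin n => (j : ℕ) < i).image fun j => (u j : ℕ)).card
      = ((Finset.univ.filter fun j : Fin n => (j : ℕ) < i).image fun j => (v j : ℕ)).card := by
  rw [Finset.card_image_of_injective _ (fun x y h => u.injective (Fin.ext h) :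
      Function.Injective (fun j : Fin n => (u j : ℕ))),
    Finset.card_image_of_injective _ (fun x y h => v.injective (Fin.ext h) :
      Function.Injective (fun j : Fin n => (v j : ℕ)))]

end Helpers

/-- Ehresmann's criterion: `u ≤ v` in the Bruhat order on `S_n` if and only if for
every `1 ≤ i ≤ n`, the image of the initial segment of size `i` under `u` is
componentwise at most the one under `v` (sorting both sets increasingly and
comparing entry by entry). -/
theorem stmt_7 (n : ℕ) (u v : Equiv.Perm (Fin n)) :
    bruhatLE u v ↔ ∀ i : ℕ, 1 ≤ i → i ≤ n →
      List.Forall₂ (· ≤ ·)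
        (((Finset.univ.filter fun j : Fin n => (j : ℕ) < i).image
          fun j => (u j : ℕ)).sort (· ≤ ·))
        (((Finset.univ.filter fun j : Fin n => (j : ℕ) < i).image
          fun j => (v j : ℕ)).sort (· ≤ ·)) := by
  constructor
  · intro h i _ _
    have hdom := dom_of_le h
    refine (sort_forall₂_iff (card_image_eq u v i)).mpr ?_
    intro k
    rw [image_filter_card, image_filter_card]
    exact hdom i k
  · intro h
    apply le_of_dom
    intro c k
    rcases Nat.eq_zero_or_pos c with rfl | hc
    · rw [cnt_zero, cnt_zero]
    by_cases hcn : c ≤ n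
    · have := (sort_forall₂_iff (card_image_eq u v c)).mp (h c hc hcn) k
      rw [image_filter_card, image_filter_card] at this
      exact this
    · rw [cnt_clamp u (le_of_not_ge hcn), cnt_clamp v (le_of_not_ge hcn)]
      rcases Nat.eq_zero_or_pos n with hn | hn
      · subst hn
        rw [cnt_zero, cnt_zero]
      · have := (sort_forall₂_iff (card_image_eq u v n)).mp (h n hn le_rfl) k
        rw [image_filter_card, image_filter_card] at this
        exact this
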